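/- arXiv:1809.09573 — 2 statements merged into one kernel-verified Lean document; each statement's English description precedes it below -/
import Mathlib

section
/- Let M ∈ ℝⁿˣⁿ be symmetric positive semidefinite with eigenvalues λ₁ > λ₂ ≥ … ≥ λₙ ≥ 0 and orthonormal eigenvectors u₁, …, uₙ, and let f(x) = (1/4)·‖xxᵀ − M‖_F², whose Hessian is ∇²f(x) = ‖x‖₂²·Iₙ + 2·xxᵀ − M. Then for every x ∈ ℝⁿ with ‖x − √λ₁·u₁‖₂ ≤ (λ₁ − λ₂)/(15·√λ₁), one has 0.25·(λ₁ − λ₂)·Iₙ ⪯ ∇²f(x) ⪯ 4.5·λ₁·Iₙ. -/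
open Matrix

/-- The Euclidean (ℓ₂) norm of a vector in `ℝⁿ`. -/
noncomputable def l2norm {p : ℕ} (v : Fin p → ℝ) : ℝ :=
  Real.sqrt (∑ i, v i ^ 2)

lemma l2norm_sq {p : ℕ} (v : Fin p → ℝ) : l2norm v ^ 2 = v ⬝ᵥ v := by
  unfold l2norm
  rw [Real.sq_sqrt (by positivity)]
  simp [dotProduct, pow_two]

lemma dot_self_nonneg' {p : ℕ} (v : Fin p → ℝ) : 0 ≤ v ⬝ᵥ v :=
  Finset.sum_nonneg fun i _ => mul_self_nonneg _

lemma dot_cs {p : ℕ} (a b : Fin p → ℝ) : (a ⬝ᵥ b) ^ 2 ≤ (a ⬝ᵥ a) * (b ⬝ᵥ b) := by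
  have h := Finset.sum_mul_sq_le_sq_mul_sq Finset.univ a b
  simpa [dotProduct, pow_two] using h

lemma vmv_mulVec {p : ℕ} (a b v : Fin p → ℝ) :
    Matrix.vecMulVec a b *ᵥ v = (b ⬝ᵥ v) • a := by
  funext i
  simp only [Matrix.mulVec, Matrix.vecMulVec_apply, dotProduct, Pi.smul_apply,
    smul_eq_mul, Finset.sum_mul]
  exact Finset.sum_congr rfl fun j _ => by ring

lemma sum_mulVec' {p : ℕ} (A : Fin p → Matrix (Fin p) (Fin p) ℝ) (v : Fin p → ℝ) :
    (∑ i, A i) *ᵥ v = ∑ i, A i *ᵥ v := by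
  funext j
  simp only [Matrix.mulVec, dotProduct, Matrix.sum_apply, Finset.sum_apply, Finset.sum_mul]
  rw [Finset.sum_comm]

lemma dot_sum_right {p q : ℕ} (v : Fin p → ℝ) (f : Fin q → Fin p → ℝ) :
    v ⬝ᵥ (∑ i, f i) = ∑ i, v ⬝ᵥ f i := by
  simp only [dotProduct, Finset.sum_apply, Finset.mul_sum]
  rw [Finset.sum_comm]

lemma bessel {p : ℕ} (u : Fin p → Fin p → ℝ)
    (horth : ∀ i j, u i ⬝ᵥ u j = if i = j then 1 else 0) (v : Fin p → ℝ) :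
    ∑ i, (u i ⬝ᵥ v) ^ 2 ≤ v ⬝ᵥ v := by
  set w0 := ∑ i, (u i ⬝ᵥ v) • u i with hw0
  have hd : ∀ z : Fin p → ℝ, z ⬝ᵥ w0 = ∑ i, (u i ⬝ᵥ v) * (z ⬝ᵥ u i) := by
    intro z
    rw [hw0, dot_sum_right]
    exact Finset.sum_congr rfl fun i _ => by rw [dotProduct_smul, smul_eq_mul]
  have huw : ∀ i, u i ⬝ᵥ w0 = u i ⬝ᵥ v := by
    intro i
    rw [hd]
    simp only [horth]
    simp [mul_ite, mul_one, mul_zero, Finset.sum_ite_eq, eq_comm]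
  have hvw : v ⬝ᵥ w0 = ∑ i, (u i ⬝ᵥ v) ^ 2 := by
    rw [hd]
    exact Finset.sum_congr rfl fun i _ => by rw [dotProduct_comm v (u i), sq]
  have hww : w0 ⬝ᵥ w0 = ∑ i, (u i ⬝ᵥ v) ^ 2 := by
    rw [hd]
    refine Finset.sum_congr rfl fun i _ => ?_
    rw [dotProduct_comm w0 (u i), huw i, sq]
  have h0 := dot_self_nonneg' (v - w0)
  have hexp : (v - w0) ⬝ᵥ (v - w0) = v ⬝ᵥ v - ∑ i, (u i ⬝ᵥ v) ^ 2 := by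
    rw [sub_dotProduct, dotProduct_sub, dotProduct_sub,
      hvw, hww, dotProduct_comm w0 v, hvw]
    ring
  linarith [hexp ▸ h0]

lemma lower_scalar (b sa δ N t s r : ℝ) (hsa0 : 0 < sa)
    (hb0 : 0 ≤ b) (hab : b < sa ^ 2) (hδ0 : 0 ≤ δ) (hN0 : 0 ≤ N)
    (hts : t ^ 2 ≤ N) (hss : s ^ 2 ≤ δ ^ 2 * N) (hrδ : r ^ 2 ≤ δ ^ 2)
    (hδb : 15 * (sa * δ) ≤ sa ^ 2 - b) :
    0.25 * (sa ^ 2 - b) * N ≤ (sa ^ 2 + 2 * sa * r + δ ^ 2) * N + 2 * (sa * t + s) ^ 2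
      - (b * N + (sa ^ 2 - b) * t ^ 2) := by
  have hg0 : 0 < sa ^ 2 - b := sub_pos.mpr hab
  have hab0 : 0 < sa ^ 2 + b := by nlinarith
  have hrge : -δ ≤ r := by nlinarith [sq_nonneg (δ + r)]
  have P1 : 0 ≤ ((sa ^ 2 + b) * t + 2 * sa * s) ^ 2 := sq_nonneg _
  have P3 : 225 * (sa ^ 2 * δ ^ 2) ≤ (sa ^ 2 - b) ^ 2 := by
    nlinarith [mul_nonneg hsa0.le hδ0]
  have P3N : 225 * (sa ^ 2 * δ ^ 2) * N ≤ (sa ^ 2 - b) ^ 2 * N :=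
    mul_le_mul_of_nonneg_right P3 hN0
  have P2 : 4 * sa ^ 2 * s ^ 2 ≤ 4 * sa ^ 2 * (δ ^ 2 * N) := by nlinarith [sq_nonneg sa]
  have P4 : (sa ^ 2 - b) ^ 2 * N ≤ (sa ^ 2 - b) * (sa ^ 2 + b) * N := by
    nlinarith [mul_nonneg hg0.le hN0]
  have P5 : 15 * (sa * δ) * (N * (sa ^ 2 + b)) ≤ (sa ^ 2 - b) * (N * (sa ^ 2 + b)) :=
    mul_le_mul_of_nonneg_right hδb (mul_nonneg hN0 hab0.le)
  have P6 : -(sa * δ * (N * (sa ^ 2 + b))) ≤ sa * r * (N * (sa ^ 2 + b)) := by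
    have h1 : 0 ≤ sa * (N * (sa ^ 2 + b)) := mul_nonneg hsa0.le (mul_nonneg hN0 hab0.le)
    nlinarith [mul_le_mul_of_nonneg_left hrge h1]
  have main : 0 ≤ (sa ^ 2 + b) * (0.75 * (sa ^ 2 - b) * N + 2 * sa * r * N + δ ^ 2 * N
      + (sa ^ 2 + b) * t ^ 2 + 4 * sa * t * s + 2 * s ^ 2) := by
    linarith [P1, P2, P3N, P4, P5, P6,
      mul_nonneg (mul_nonneg hab0.le (sq_nonneg δ)) hN0,
      mul_nonneg hab0.le (sq_nonneg s),
      mul_nonneg (mul_nonneg hg0.le hN0) hab0.le]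
  have hT : 0 ≤ 0.75 * (sa ^ 2 - b) * N + 2 * sa * r * N + δ ^ 2 * N
      + (sa ^ 2 + b) * t ^ 2 + 4 * sa * t * s + 2 * s ^ 2 := by
    by_contra hcon
    push_neg at hcon
    linarith [main, mul_pos hab0 (neg_pos.mpr hcon)]
  linarith [hT]

lemma upper_scalar (b sa δ N t s r S : ℝ) (hsa0 : 0 < sa) (hb0 : 0 ≤ b)
    (hδ0 : 0 ≤ δ) (hN0 : 0 ≤ N) (hS0 : 0 ≤ S) (hrδ : r ^ 2 ≤ δ ^ 2)
    (hδb : 15 * (sa * δ) ≤ sa ^ 2 - b)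
    (hcs : (sa * t + s) ^ 2 ≤ (sa ^ 2 + 2 * sa * r + δ ^ 2) * N) :
    (sa ^ 2 + 2 * sa * r + δ ^ 2) * N + 2 * (sa * t + s) ^ 2 - S ≤ 4.5 * sa ^ 2 * N := by
  have hr_up : r ≤ δ := by nlinarith [sq_nonneg (δ - r)]
  have P3 : 225 * (sa ^ 2 * δ ^ 2) ≤ (sa ^ 2 - b) ^ 2 := by
    nlinarith [mul_nonneg hsa0.le hδ0]
  have ha0 : 0 < sa ^ 2 := by positivity
  have hδ2 : 225 * δ ^ 2 ≤ sa ^ 2 := by nlinarith [P3, hb0, ha0]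
  have hsaδ : 15 * (sa * δ) ≤ sa ^ 2 := le_trans hδb (by linarith)
  have h2 : 15 * (sa * δ) * N ≤ sa ^ 2 * N := mul_le_mul_of_nonneg_right hsaδ hN0
  have h3 : sa * r * N ≤ sa * δ * N :=
    mul_le_mul_of_nonneg_right (mul_le_mul_of_nonneg_left hr_up hsa0.le) hN0
  have h4 : 225 * δ ^ 2 * N ≤ sa ^ 2 * N := mul_le_mul_of_nonneg_right hδ2 hN0
  linarith [hcs, hS0, h2, h3, h4, mul_nonneg (sq_nonneg sa) hN0]

/-- **Local strong convexity and smoothness for rank-1 matrix factorization.**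
Let `M = ∑ᵢ λᵢ uᵢuᵢᵀ` be symmetric PSD with `λ₁ > λ₂ ≥ … ≥ λₙ ≥ 0`, orthonormal `uᵢ`, and
`f(x) = ¼‖xxᵀ − M‖_F²` with Hessian `∇²f(x) = ‖x‖₂² Iₙ + 2xxᵀ − M`. Then for every `x` with
`‖x − √λ₁ u₁‖₂ ≤ (λ₁ − λ₂)/(15√λ₁)`, one has
`0.25 (λ₁ − λ₂) Iₙ ⪯ ∇²f(x) ⪯ 4.5 λ₁ Iₙ`. -/
theorem rank_one_factorization_local_hessian_bounds
    (n : ℕ) (hn : 1 < n)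
    (M : Matrix (Fin n) (Fin n) ℝ)
    (lam : Fin n → ℝ) (u : Fin n → (Fin n → ℝ))
    (horth : ∀ i j : Fin n, dotProduct (u i) (u j) = if i = j then 1 else 0)
    (hdecomp : M = ∑ i, lam i • Matrix.vecMulVec (u i) (u i))
    (hmono : Antitone lam)
    (hnonneg : ∀ i, 0 ≤ lam i)
    (hgap : lam ⟨1, hn⟩ < lam ⟨0, by omega⟩)
    (x : Fin n → ℝ)
    (hx : l2norm (x - Real.sqrt (lam ⟨0, by omega⟩) • u ⟨0, by omega⟩)
      ≤ (lam ⟨0, by omega⟩ - lam ⟨1, hn⟩) / (15 * Real.sqrt (lam ⟨0, by omega⟩))) :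
    ((l2norm x ^ 2 • (1 : Matrix (Fin n) (Fin n) ℝ) + (2 : ℝ) • Matrix.vecMulVec x x - M)
        - (0.25 * (lam ⟨0, by omega⟩ - lam ⟨1, hn⟩)) • (1 : Matrix (Fin n) (Fin n) ℝ)).PosSemidef
    ∧ ((4.5 * lam ⟨0, by omega⟩) • (1 : Matrix (Fin n) (Fin n) ℝ)
        - (l2norm x ^ 2 • (1 : Matrix (Fin n) (Fin n) ℝ) + (2 : ℝ) • Matrix.vecMulVec x x - M)).PosSemidef := by
  have h0n : (0:ℕ) < n := by omega
  set i0 : Fin n := ⟨0, h0n⟩ with hi0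
  set i1 : Fin n := ⟨1, hn⟩ with hi1
  set a := lam i0 with ha'
  set b := lam i1 with hb'
  have hb0 : 0 ≤ b := hnonneg i1
  have hab : b < a := hgap
  have ha0 : 0 < a := lt_of_le_of_lt hb0 hab
  set sa := Real.sqrt a with hsa'
  have hsa0 : 0 < sa := Real.sqrt_pos.mpr ha0
  have hsa2 : sa ^ 2 = a := Real.sq_sqrt ha0.le
  set e : Fin n → ℝ := x - sa • u i0 with he
  set δ := l2norm e with hδ'
  have hδ0 : 0 ≤ δ := Real.sqrt_nonneg _
  have hee : e ⬝ᵥ e = δ ^ 2 := (l2norm_sq e).symm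
  have hu00 : u i0 ⬝ᵥ u i0 = 1 := by simpa using horth i0 i0
  have hxe : sa • u i0 + e = x := by rw [he]; abel
  set r := u i0 ⬝ᵥ e with hr'
  have hrδ : r ^ 2 ≤ δ ^ 2 := by
    have := dot_cs (u i0) e
    rwa [hu00, hee, one_mul] at this
  have hδb : 15 * (sa * δ) ≤ a - b := by
    have h15 : 0 < 15 * sa := by positivity
    have hx' : δ ≤ (a - b) / (15 * sa) := hx
    calc 15 * (sa * δ) = δ * (15 * sa) := by ring
      _ ≤ ((a - b) / (15 * sa)) * (15 * sa) := by
          exact mul_le_mul_of_nonneg_right hx' h15.le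
      _ = a - b := by field_simp
  have hxx : x ⬝ᵥ x = a + 2 * sa * r + δ ^ 2 := by
    rw [← hxe]
    simp only [add_dotProduct, dotProduct_add, smul_dotProduct,
      dotProduct_smul, smul_eq_mul, hu00, hee, dotProduct_comm e (u i0), ← hr']
    rw [← hsa2]; ring
  -- quadratic form of M
  have hquadM : ∀ v : Fin n → ℝ, v ⬝ᵥ (M *ᵥ v) = ∑ i, lam i * (u i ⬝ᵥ v) ^ 2 := by
    intro v
    rw [hdecomp, sum_mulVec', dot_sum_right]
    refine Finset.sum_congr rfl fun i _ => ?_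
    rw [Matrix.smul_mulVec, vmv_mulVec, dotProduct_smul, dotProduct_smul,
      smul_eq_mul, smul_eq_mul, dotProduct_comm v (u i)]
    ring
  set H := l2norm x ^ 2 • (1 : Matrix (Fin n) (Fin n) ℝ) + (2:ℝ) • Matrix.vecMulVec x x - M
    with hH
  have hform : ∀ v : Fin n → ℝ,
      v ⬝ᵥ (H *ᵥ v) = (x ⬝ᵥ x) * (v ⬝ᵥ v) + 2 * (x ⬝ᵥ v) ^ 2 - ∑ i, lam i * (u i ⬝ᵥ v) ^ 2 := by
    intro v
    rw [hH, Matrix.sub_mulVec, Matrix.add_mulVec, dotProduct_sub, dotProduct_add,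
      Matrix.smul_mulVec, Matrix.one_mulVec, Matrix.smul_mulVec, vmv_mulVec,
      dotProduct_smul, dotProduct_smul, dotProduct_smul, hquadM,
      l2norm_sq x, dotProduct_comm v x]
    simp only [smul_eq_mul]
    ring
  -- symmetry
  have hMsym : M.IsHermitian := by
    rw [hdecomp]
    ext i j
    simp only [Matrix.conjTranspose_apply, Matrix.sum_apply, Matrix.smul_apply,
      Matrix.vecMulVec_apply, smul_eq_mul, star_trivial]
    exact Finset.sum_congr rfl fun k _ => by ring
  have hMeq : ∀ i j, M i j = M j i := by
    intro i j
    have h := congrFun (congrFun hMsym j) i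
    simpa [Matrix.conjTranspose_apply] using h
  have hHsym : H.IsHermitian := by
    rw [hH]
    ext i j
    simp only [Matrix.conjTranspose_apply, Matrix.sub_apply, Matrix.add_apply,
      Matrix.smul_apply, Matrix.vecMulVec_apply, smul_eq_mul, star_trivial]
    have h1s : (1 : Matrix (Fin n) (Fin n) ℝ) j i = (1 : Matrix (Fin n) (Fin n) ℝ) i j := by
      simp [Matrix.one_apply, eq_comm]
    rw [h1s, hMeq j i]
    ring
  have honeS : ∀ c : ℝ, (c • (1 : Matrix (Fin n) (Fin n) ℝ)).IsHermitian := by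
    intro c
    ext i j
    by_cases hij : i = j
    · subst hij; simp
    · simp [Matrix.conjTranspose_apply, Matrix.one_apply, hij, Ne.symm hij]
  -- scalar facts per vector
  have key : ∀ v : Fin n → ℝ,
      0.25 * (a - b) * (v ⬝ᵥ v) ≤ v ⬝ᵥ (H *ᵥ v) ∧ v ⬝ᵥ (H *ᵥ v) ≤ 4.5 * a * (v ⬝ᵥ v) := by
    intro v
    set N := v ⬝ᵥ v with hN'
    have hN0 : 0 ≤ N := dot_self_nonneg' v
    set t := u i0 ⬝ᵥ v with ht'
    set s := e ⬝ᵥ v with hs'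
    have hts : t ^ 2 ≤ N := by
      have := dot_cs (u i0) v; rwa [hu00, one_mul] at this
    have hss : s ^ 2 ≤ δ ^ 2 * N := by
      have := dot_cs e v; rwa [hee] at this
    have hxv : x ⬝ᵥ v = sa * t + s := by
      rw [← hxe, add_dotProduct, smul_dotProduct, smul_eq_mul]
    have hS0 : 0 ≤ ∑ i, lam i * (u i ⬝ᵥ v) ^ 2 :=
      Finset.sum_nonneg fun i _ => mul_nonneg (hnonneg i) (sq_nonneg _)
    have hSup : ∑ i, lam i * (u i ⬝ᵥ v) ^ 2 ≤ b * N + (a - b) * t ^ 2 := by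
      have hstep : ∀ i : Fin n, lam i * (u i ⬝ᵥ v) ^ 2
          ≤ b * (u i ⬝ᵥ v) ^ 2 + (a - b) * (if i = i0 then t ^ 2 else 0) := by
        intro i
        by_cases hii : i = i0
        · subst hii; rw [if_pos rfl]; exact le_of_eq (by ring)
        · rw [if_neg hii, mul_zero, add_zero]
          have h1i : i1 ≤ i := by
            have hne : i.val ≠ 0 := fun h => hii (Fin.ext h)
            change (1 : ℕ) ≤ i.val
            omega
          exact mul_le_mul_of_nonneg_right (hmono h1i) (sq_nonneg _)
      calc ∑ i, lam i * (u i ⬝ᵥ v) ^ 2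
          ≤ ∑ i, (b * (u i ⬝ᵥ v) ^ 2 + (a - b) * (if i = i0 then t ^ 2 else 0)) :=
            Finset.sum_le_sum fun i _ => hstep i
        _ = b * (∑ i, (u i ⬝ᵥ v) ^ 2) + (a - b) * t ^ 2 := by
            rw [Finset.sum_add_distrib, ← Finset.mul_sum, ← Finset.mul_sum]
            congr 1
            congr 1
            simp
        _ ≤ b * N + (a - b) * t ^ 2 := by
            have := bessel u horth v
            nlinarith [this, hb0]
    rw [hform v, hxx, hxv]
    constructor
    · -- lower bound
      have hls := lower_scalar b sa δ N t s r hsa0 hb0 (by rw [hsa2]; exact hab)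
        hδ0 hN0 hts hss hrδ (by rw [hsa2]; exact hδb)
      rw [hsa2] at hls
      linarith [hSup, hls]
    · -- upper bound
      have hcs : (sa * t + s) ^ 2 ≤ (a + 2 * sa * r + δ ^ 2) * N := by
        have := dot_cs x v
        rwa [hxx, hxv] at this
      have hus := upper_scalar b sa δ N t s r (∑ i, lam i * (u i ⬝ᵥ v) ^ 2) hsa0 hb0
        hδ0 hN0 hS0 hrδ (by rw [hsa2]; exact hδb) (by rw [hsa2]; exact hcs)
      rw [hsa2] at hus
      linarith [hus]
  constructor
  · refine Matrix.PosSemidef.of_dotProduct_mulVec_nonneg (hHsym.sub (honeS _)) fun v => ?_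
    have hstar : star v = v := by funext i; simp
    rw [hstar, Matrix.sub_mulVec, dotProduct_sub, Matrix.smul_mulVec,
      Matrix.one_mulVec, dotProduct_smul, smul_eq_mul]
    have := (key v).1
    linarith
  · refine Matrix.PosSemidef.of_dotProduct_mulVec_nonneg ((honeS _).sub hHsym) fun v => ?_
    have hstar : star v = v := by funext i; simp
    rw [hstar, Matrix.sub_mulVec, dotProduct_sub, Matrix.smul_mulVec,
      Matrix.one_mulVec, dotProduct_smul, smul_eq_mul]
    have := (key v).2
    linarith
end

section
/- Let A₁, …, A_m ∈ ℝ^{n₁×n₂} and define 𝒜(X) = (m^{−1/2}·⟨Aᵢ, X⟩)_{1≤i≤m}. Suppose M⋆ ∈ ℝ^{n₁×n₂} has rank at most r and 𝒜 satisfies the 2r-RIP with RIP constant δ_{2r} < 1. Then the surrogate matrix Y = (1/m)·Σᵢ ⟨Aᵢ, M⋆⟩·Aᵢ satisfies ‖Y − M⋆‖ ≤ δ_{2r}·‖M⋆‖_F ≤ δ_{2r}·√r·‖M⋆‖, where ‖·‖ denotes the spectral norm. -/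
open Matrix

/-- The Frobenius norm of a real matrix. -/
noncomputable def frobNorm {p q : ℕ} (A : Matrix (Fin p) (Fin q) ℝ) : ℝ :=
  Real.sqrt (∑ i, ∑ j, (A i j) ^ 2)

/-- The trace inner product `⟨X, Y⟩ = Tr(XᵀY)` of two real matrices. -/
def mip {p q : ℕ} (A B : Matrix (Fin p) (Fin q) ℝ) : ℝ :=
  Matrix.trace (Aᵀ * B)

/-- The spectral norm (largest singular value) of a real matrix, i.e. the operator norm of the
induced map between Euclidean spaces. -/
noncomputable def specNorm {p q : ℕ} (M : Matrix (Fin p) (Fin q) ℝ) : ℝ :=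
  ‖LinearMap.toContinuousLinearMap (Matrix.toEuclideanLin M)‖

lemma mip_eq_sum {p q : ℕ} (A B : Matrix (Fin p) (Fin q) ℝ) :
    mip A B = ∑ i, ∑ j, A i j * B i j := by
  simp [mip, Matrix.trace, Matrix.diag, Matrix.mul_apply, Matrix.transpose_apply]
  rw [Finset.sum_comm]

lemma mip_comm {p q : ℕ} (A B : Matrix (Fin p) (Fin q) ℝ) : mip A B = mip B A := by
  simp [mip_eq_sum, mul_comm]

lemma frob_sq {p q : ℕ} (A : Matrix (Fin p) (Fin q) ℝ) :
    frobNorm A ^ 2 = ∑ i, ∑ j, (A i j) ^ 2 := by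
  rw [frobNorm, Real.sq_sqrt]
  positivity

lemma frob_nonneg {p q : ℕ} (A : Matrix (Fin p) (Fin q) ℝ) : 0 ≤ frobNorm A :=
  Real.sqrt_nonneg _

lemma mip_self {p q : ℕ} (A : Matrix (Fin p) (Fin q) ℝ) : mip A A = frobNorm A ^ 2 := by
  rw [mip_eq_sum, frob_sq]; ring_nf

lemma matrix_rank_add_le {p q : ℕ} (A B : Matrix (Fin p) (Fin q) ℝ) :
    (A + B).rank ≤ A.rank + B.rank := by
  unfold Matrix.rank
  rw [Matrix.mulVecLin_add]
  refine le_trans ?_ (Submodule.finrank_add_le_finrank_add_finrank _ _)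
  apply Submodule.finrank_mono
  rintro x ⟨v, rfl⟩
  exact Submodule.mem_sup.2 ⟨A.mulVecLin v, ⟨v, rfl⟩, B.mulVecLin v, ⟨v, rfl⟩, rfl⟩

lemma matrix_rank_smul_le {p q : ℕ} (c : ℝ) (A : Matrix (Fin p) (Fin q) ℝ) :
    (c • A).rank ≤ A.rank := by
  unfold Matrix.rank
  apply Submodule.finrank_mono
  rintro x ⟨v, rfl⟩
  exact ⟨c • v, by simp [Matrix.mulVecLin, Matrix.mulVec_smul, Matrix.smul_mulVec]⟩

lemma mip_add_right {p q : ℕ} (A B C : Matrix (Fin p) (Fin q) ℝ) :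
    mip A (B + C) = mip A B + mip A C := by
  simp [mip, Matrix.mul_add]

lemma mip_sub_right {p q : ℕ} (A B C : Matrix (Fin p) (Fin q) ℝ) :
    mip A (B - C) = mip A B - mip A C := by
  simp [mip, Matrix.mul_sub]

lemma mip_smul_right {p q : ℕ} (c : ℝ) (A B : Matrix (Fin p) (Fin q) ℝ) :
    mip A (c • B) = c * mip A B := by
  simp [mip, Matrix.mul_smul]

lemma mip_sum_right {p q : ℕ} {ι : Type*} (s : Finset ι) (A : Matrix (Fin p) (Fin q) ℝ)
    (f : ι → Matrix (Fin p) (Fin q) ℝ) :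
    mip A (∑ k ∈ s, f k) = ∑ k ∈ s, mip A (f k) := by
  simp [mip, Matrix.mul_sum, Matrix.trace_sum]

lemma mip_vecMulVec {p q : ℕ} (w : Fin p → ℝ) (v : Fin q → ℝ) (B : Matrix (Fin p) (Fin q) ℝ) :
    mip (Matrix.vecMulVec w v) B = ∑ i, w i * (B.mulVec v i) := by
  simp only [mip_eq_sum, Matrix.vecMulVec_apply, Matrix.mulVec, dotProduct,
    Finset.mul_sum]
  exact Finset.sum_congr rfl fun i _ => Finset.sum_congr rfl fun j _ => by ring

lemma frob_sq_vecMulVec {p q : ℕ} (w : Fin p → ℝ) (v : Fin q → ℝ) :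
    frobNorm (Matrix.vecMulVec w v) ^ 2 = (∑ i, w i ^ 2) * (∑ j, v j ^ 2) := by
  rw [frob_sq]
  simp only [Matrix.vecMulVec_apply, mul_pow, Finset.sum_mul, Finset.mul_sum]
  rw [Finset.sum_comm]

lemma euclid_norm {p : ℕ} (x : EuclideanSpace ℝ (Fin p)) :
    ‖x‖ = Real.sqrt (∑ i, x i ^ 2) := by
  rw [EuclideanSpace.norm_eq]
  congr 1
  exact Finset.sum_congr rfl fun i _ => by rw [Real.norm_eq_abs, sq_abs]

lemma specNorm_app {p q : ℕ} (B : Matrix (Fin p) (Fin q) ℝ) (x : EuclideanSpace ℝ (Fin q)) :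
    ‖(LinearMap.toContinuousLinearMap (toEuclideanLin B)) x‖
      = Real.sqrt (∑ i, (B.mulVec (fun j => x j) i) ^ 2) := by
  rw [LinearMap.coe_toContinuousLinearMap', toEuclideanLin_apply, euclid_norm]

lemma mulVec_norm_le {p q : ℕ} (M : Matrix (Fin p) (Fin q) ℝ) (v : Fin q → ℝ) :
    Real.sqrt (∑ i, (M.mulVec v i) ^ 2) ≤ specNorm M * Real.sqrt (∑ j, v j ^ 2) := by
  set x : EuclideanSpace ℝ (Fin q) := (WithLp.equiv 2 _).symm v with hx
  have h := (LinearMap.toContinuousLinearMap (toEuclideanLin M)).le_opNorm x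
  rw [specNorm_app, euclid_norm] at h
  have h1 : (fun j => x j) = v := rfl
  have h2 : (∑ i, x i ^ 2) = ∑ j, v j ^ 2 := rfl
  rw [h1] at h
  rw [h2] at h
  exact h

lemma specNorm_le_of_forall {p q : ℕ} (B : Matrix (Fin p) (Fin q) ℝ) (c : ℝ) (hc : 0 ≤ c)
    (h : ∀ (w : Fin p → ℝ) (v : Fin q → ℝ),
      |∑ i, w i * B.mulVec v i| ≤ c * Real.sqrt (∑ i, w i ^ 2) * Real.sqrt (∑ j, v j ^ 2)) :
    specNorm B ≤ c := by
  rw [specNorm]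
  apply ContinuousLinearMap.opNorm_le_bound _ hc
  intro x
  rw [specNorm_app, euclid_norm]
  set v : Fin q → ℝ := fun j => x j with hv
  set w : Fin p → ℝ := B.mulVec v with hw
  set a : ℝ := Real.sqrt (∑ i, w i ^ 2) with ha
  set b : ℝ := Real.sqrt (∑ j, v j ^ 2) with hb
  have ha0 : 0 ≤ a := Real.sqrt_nonneg _
  have hb0 : 0 ≤ b := Real.sqrt_nonneg _
  have haa : a * a = ∑ i, w i ^ 2 := Real.mul_self_sqrt (by positivity)
  have key : a * a ≤ (c * b) * a := by
    rw [haa]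
    have := h w v
    have heq : ∑ i, w i * B.mulVec v i = ∑ i, w i ^ 2 := by
      apply Finset.sum_congr rfl
      intro i _
      rw [← hw, sq]
    rw [heq] at this
    calc ∑ i, w i ^ 2 ≤ |∑ i, w i ^ 2| := le_abs_self _
      _ ≤ c * a * b := this
      _ = (c * b) * a := by ring
  rcases eq_or_lt_of_le ha0 with h0 | h0
  · rw [← h0]; positivity
  · exact le_of_mul_le_mul_right key h0

lemma specNorm_nonneg {p q : ℕ} (M : Matrix (Fin p) (Fin q) ℝ) : 0 ≤ specNorm M :=
  norm_nonneg _

lemma frob_sq_le_rank_mul_spec {p q : ℕ} (M : Matrix (Fin p) (Fin q) ℝ) :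
    frobNorm M ^ 2 ≤ (M.rank : ℝ) * specNorm M ^ 2 := by
  set G := Mᵀ * M with hGdef
  have hG : G.IsHermitian := by simpa using isHermitian_conjTranspose_mul_self M
  -- frobNorm² = trace G
  have htr : frobNorm M ^ 2 = Matrix.trace G := by
    rw [frob_sq, Matrix.trace]
    rw [Finset.sum_comm]
    apply Finset.sum_congr rfl
    intro j _
    simp [hGdef, Matrix.diag, Matrix.mul_apply, sq]
  -- trace G = sum of eigenvalues
  have htr2 : Matrix.trace G = ∑ j, hG.eigenvalues j := by
    simpa using hG.trace_eq_sum_eigenvalues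
  -- each eigenvalue in [0, specNorm²]
  have hev : ∀ j, 0 ≤ hG.eigenvalues j ∧ hG.eigenvalues j ≤ specNorm M ^ 2 := by
    intro j
    set u : Fin q → ℝ := ⇑(hG.eigenvectorBasis j) with hu
    have hunit : ∑ i, u i ^ 2 = 1 := by
      have h1 : ‖hG.eigenvectorBasis j‖ = 1 := hG.eigenvectorBasis.orthonormal.1 j
      rw [euclid_norm] at h1
      have := congrArg (· ^ 2) h1
      simpa [Real.sq_sqrt (by positivity : (0:ℝ) ≤ ∑ i, hG.eigenvectorBasis j i ^ 2)] using this
    have hmv : G *ᵥ u = hG.eigenvalues j • u := hG.mulVec_eigenvectorBasis j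
    have hdot : u ⬝ᵥ (G *ᵥ u) = hG.eigenvalues j := by
      rw [hmv]
      simp only [dotProduct, Pi.smul_apply, smul_eq_mul]
      have : ∑ i, u i * (hG.eigenvalues j * u i) = hG.eigenvalues j * ∑ i, u i ^ 2 := by
        rw [Finset.mul_sum]; apply Finset.sum_congr rfl; intro i _; ring
      rw [this, hunit, mul_one]
    have hdot2 : u ⬝ᵥ (G *ᵥ u) = ∑ i, (M.mulVec u i) ^ 2 := by
      rw [hGdef, ← Matrix.mulVec_mulVec, Matrix.dotProduct_mulVec, Matrix.vecMul_transpose]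
      simp [dotProduct, sq]
    have hval : hG.eigenvalues j = ∑ i, (M.mulVec u i) ^ 2 := by rw [← hdot, hdot2]
    constructor
    · rw [hval]; positivity
    · rw [hval]
      have hle := mulVec_norm_le M u
      rw [hunit, Real.sqrt_one, mul_one] at hle
      have h2 := mul_self_le_mul_self (Real.sqrt_nonneg _) hle
      rw [Real.mul_self_sqrt (by positivity)] at h2
      calc ∑ i, (M.mulVec u i) ^ 2 ≤ specNorm M * specNorm M := h2
        _ = specNorm M ^ 2 := (sq (specNorm M)).symm
  -- sum of eigenvalues ≤ rank * specNorm²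
  have hsum : ∑ j, hG.eigenvalues j ≤ (M.rank : ℝ) * specNorm M ^ 2 := by
    classical
    have hsplit : ∑ j, hG.eigenvalues j
        = ∑ j ∈ Finset.univ.filter (fun j => hG.eigenvalues j ≠ 0), hG.eigenvalues j := by
      rw [Finset.sum_filter_ne_zero]
    have hcard : ((Finset.univ.filter (fun j => hG.eigenvalues j ≠ 0)).card : ℝ)
        = (M.rank : ℝ) := by
      have h1 : G.rank = Fintype.card {i // hG.eigenvalues i ≠ 0} :=
        hG.rank_eq_card_non_zero_eigs
      have h2 : G.rank = M.rank := Matrix.rank_transpose_mul_self M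
      rw [Fintype.card_subtype] at h1
      rw [← h2, h1]
    rw [hsplit]
    calc ∑ j ∈ Finset.univ.filter (fun j => hG.eigenvalues j ≠ 0), hG.eigenvalues j
        ≤ ∑ _j ∈ Finset.univ.filter (fun j => hG.eigenvalues j ≠ 0), specNorm M ^ 2 :=
          Finset.sum_le_sum fun j _ => (hev j).2
      _ = ((Finset.univ.filter (fun j => hG.eigenvalues j ≠ 0)).card : ℝ) * specNorm M ^ 2 := by
          rw [Finset.sum_const, nsmul_eq_mul]
      _ = (M.rank : ℝ) * specNorm M ^ 2 := by rw [hcard]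
  rw [htr, htr2]
  exact hsum

lemma frob_le_sqrt_rank_spec {p q r : ℕ} (M : Matrix (Fin p) (Fin q) ℝ) (h : M.rank ≤ r) :
    frobNorm M ≤ Real.sqrt r * specNorm M := by
  have h1 : frobNorm M ^ 2 ≤ (r : ℝ) * specNorm M ^ 2 := by
    refine (frob_sq_le_rank_mul_spec M).trans ?_
    apply mul_le_mul_of_nonneg_right _ (by positivity)
    exact_mod_cast h
  have h2 : frobNorm M = Real.sqrt (frobNorm M ^ 2) := by
    rw [Real.sqrt_sq (frob_nonneg M)]
  rw [h2]
  calc Real.sqrt (frobNorm M ^ 2) ≤ Real.sqrt ((r : ℝ) * specNorm M ^ 2) :=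
        Real.sqrt_le_sqrt h1
    _ = Real.sqrt r * specNorm M := by
        rw [Real.sqrt_mul (by positivity), Real.sqrt_sq (specNorm_nonneg M)]

lemma rank_vecMulVec_le {p q : ℕ} (w : Fin p → ℝ) (v : Fin q → ℝ) :
    (Matrix.vecMulVec w v).rank ≤ 1 := by
  classical
  unfold Matrix.rank
  have hrange : LinearMap.range (Matrix.vecMulVec w v).mulVecLin ≤ (ℝ ∙ w) := by
    rintro x ⟨y, rfl⟩
    refine Submodule.mem_span_singleton.2 ⟨v ⬝ᵥ y, ?_⟩
    funext i
    simp only [Matrix.mulVecLin_apply, Matrix.mulVec, Matrix.vecMulVec_apply,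
      dotProduct, Pi.smul_apply, smul_eq_mul, Finset.sum_mul, Finset.mul_sum]
    exact Finset.sum_congr rfl fun j _ => by ring
  refine le_trans (Submodule.finrank_mono hrange) ?_
  by_cases hw : w = 0
  · subst hw
    rw [Submodule.span_zero_singleton]
    simp
  · rw [finrank_span_singleton hw]

lemma rank_pos_of_ne_zero {p q : ℕ} (M : Matrix (Fin p) (Fin q) ℝ) (h : M ≠ 0) :
    1 ≤ M.rank := by
  by_contra hc
  push_neg at hc
  interval_cases h' : M.rank
  · apply h
    have h0 : LinearMap.range M.mulVecLin = ⊥ := by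
      have := h'
      unfold Matrix.rank at this
      exact Submodule.finrank_eq_zero.1 this
    ext i j
    have hy : M.mulVecLin (Pi.single j 1) = 0 := by
      have : M.mulVecLin (Pi.single j 1) ∈ LinearMap.range M.mulVecLin := ⟨_, rfl⟩
      rw [h0] at this
      simpa using this
    have := congrFun hy i
    simpa [Matrix.mulVecLin_apply, Matrix.mulVec_single] using this

lemma frob_smul {p q : ℕ} (c : ℝ) (A : Matrix (Fin p) (Fin q) ℝ) :
    frobNorm (c • A) = |c| * frobNorm A := by
  rw [frobNorm, frobNorm]
  have : ∑ i, ∑ j, ((c • A) i j) ^ 2 = c ^ 2 * ∑ i, ∑ j, (A i j) ^ 2 := by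
    simp only [Matrix.smul_apply, smul_eq_mul, mul_pow, Finset.mul_sum]
  rw [this, Real.sqrt_mul (by positivity), Real.sqrt_sq_eq_abs]

lemma frob_eq_zero {p q : ℕ} (M : Matrix (Fin p) (Fin q) ℝ) (h : frobNorm M = 0) :
    M = 0 := by
  rw [frobNorm] at h
  have hS : ∑ i, ∑ j, (M i j) ^ 2 = 0 := by
    have h1 := Real.sqrt_eq_zero (by positivity : (0:ℝ) ≤ ∑ i, ∑ j, (M i j) ^ 2)
    exact h1.1 h
  ext i j
  have h2 := (Finset.sum_eq_zero_iff_of_nonneg (fun i _ => by positivity)).1 hS i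
    (Finset.mem_univ i)
  have h3 := (Finset.sum_eq_zero_iff_of_nonneg (fun j _ => by positivity)).1 h2 j
    (Finset.mem_univ j)
  simpa using pow_eq_zero_iff (n := 2) (by norm_num) |>.1 h3


/-- **Accuracy of the spectral-method surrogate matrix in matrix sensing.**
Let `𝒜(X) = (m^{-1/2}⟨Aᵢ, X⟩)ᵢ` satisfy the `2r`-RIP with constant `δ_{2r} < 1`, and let `M⋆`
have rank at most `r`. Then `Y = (1/m) ∑ᵢ ⟨Aᵢ, M⋆⟩ Aᵢ` satisfies
`‖Y − M⋆‖ ≤ δ_{2r}‖M⋆‖_F ≤ δ_{2r}√r‖M⋆‖`. -/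
theorem spectral_surrogate_matrix_sensing_accuracy
    (n₁ n₂ m r : ℕ)
    (A : Fin m → Matrix (Fin n₁) (Fin n₂) ℝ)
    (δ : ℝ) (hδ0 : 0 ≤ δ) (hδ : δ < 1)
    (hRIP : ∀ X : Matrix (Fin n₁) (Fin n₂) ℝ, X.rank ≤ 2 * r →
      (1 - δ) * frobNorm X ^ 2 ≤ (1 / (m : ℝ)) * ∑ i, (mip (A i) X) ^ 2 ∧
      (1 / (m : ℝ)) * ∑ i, (mip (A i) X) ^ 2 ≤ (1 + δ) * frobNorm X ^ 2)
    (Mstar : Matrix (Fin n₁) (Fin n₂) ℝ) (hrank : Mstar.rank ≤ r) :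
    specNorm ((1 / (m : ℝ)) • ∑ i, mip (A i) Mstar • A i - Mstar) ≤ δ * frobNorm Mstar
    ∧ δ * frobNorm Mstar ≤ δ * Real.sqrt r * specNorm Mstar := by
  have part2 : δ * frobNorm Mstar ≤ δ * Real.sqrt r * specNorm Mstar := by
    have h := frob_le_sqrt_rank_spec Mstar hrank
    calc δ * frobNorm Mstar ≤ δ * (Real.sqrt r * specNorm Mstar) :=
          mul_le_mul_of_nonneg_left h hδ0
      _ = δ * Real.sqrt r * specNorm Mstar := by ring
  refine ⟨?_, part2⟩
  by_cases hM : Mstar = 0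
  · subst hM
    have hz : ((1 / (m : ℝ)) • ∑ i, mip (A i) (0 : Matrix (Fin n₁) (Fin n₂) ℝ) • A i
        - (0 : Matrix (Fin n₁) (Fin n₂) ℝ)) = 0 := by
      simp [mip]
    rw [hz]
    have h1 : specNorm (0 : Matrix (Fin n₁) (Fin n₂) ℝ) = 0 := by
      rw [specNorm]
      simp
    have h2 : frobNorm (0 : Matrix (Fin n₁) (Fin n₂) ℝ) = 0 := by
      rw [frobNorm]; simp
    rw [h1, h2, mul_zero]
  set B := (1 / (m : ℝ)) • ∑ i, mip (A i) Mstar • A i - Mstar with hB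
  have hFM : 0 < frobNorm Mstar := by
    rcases (frob_nonneg Mstar).lt_or_eq with h | h
    · exact h
    · exact absurd (frob_eq_zero _ h.symm) hM
  have hr1 : 1 ≤ r := le_trans (rank_pos_of_ne_zero Mstar hM) hrank
  have hq : ∀ X : Matrix (Fin n₁) (Fin n₂) ℝ, X.rank ≤ 1 →
      |mip X B| ≤ δ / 2 * (frobNorm Mstar ^ 2 + frobNorm X ^ 2) := by
    intro X hX
    have hrp : (Mstar + X).rank ≤ 2 * r := by
      refine le_trans (matrix_rank_add_le _ _) ?_
      omega
    have hrm : (Mstar - X).rank ≤ 2 * r := by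
      have hsub : Mstar - X = Mstar + (-1 : ℝ) • X := by
        rw [neg_one_smul, sub_eq_add_neg]
      rw [hsub]
      refine le_trans (matrix_rank_add_le _ _) ?_
      have h2 := le_trans (matrix_rank_smul_le (-1) X) hX
      omega
    obtain ⟨hlp, hup⟩ := hRIP _ hrp
    obtain ⟨hlm, hum⟩ := hRIP _ hrm
    set Sp := (1 / (m:ℝ)) * ∑ i, (mip (A i) (Mstar + X))^2 with hSp
    set Sm := (1 / (m:ℝ)) * ∑ i, (mip (A i) (Mstar - X))^2 with hSm
    set Fp := frobNorm (Mstar + X) with hFp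
    set Fm := frobNorm (Mstar - X) with hFm
    have habs1 : |Sp - Fp^2| ≤ δ * Fp^2 := abs_le.2 ⟨by nlinarith, by nlinarith⟩
    have habs2 : |Sm - Fm^2| ≤ δ * Fm^2 := abs_le.2 ⟨by nlinarith, by nlinarith⟩
    have hYX : mip X ((1 / (m : ℝ)) • ∑ i, mip (A i) Mstar • A i)
        = (1 / (m:ℝ)) * ∑ i, mip (A i) Mstar * mip (A i) X := by
      rw [mip_smul_right, mip_sum_right]
      congr 1
      apply Finset.sum_congr rfl
      intro i _
      rw [mip_smul_right, mip_comm X (A i)]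
    have hquad : Sp - Sm = 4 * ((1 / (m:ℝ)) * ∑ i, mip (A i) Mstar * mip (A i) X) := by
      rw [hSp, hSm]
      have h1 : ∑ i, (mip (A i) (Mstar + X))^2 - ∑ i, (mip (A i) (Mstar - X))^2
          = ∑ i, 4 * (mip (A i) Mstar * mip (A i) X) := by
        rw [← Finset.sum_sub_distrib]
        apply Finset.sum_congr rfl
        intro i _
        rw [mip_add_right, mip_sub_right]
        ring
      have h2 : ∑ i, 4 * (mip (A i) Mstar * mip (A i) X)
          = 4 * ∑ i, mip (A i) Mstar * mip (A i) X := by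
        rw [Finset.mul_sum]
      calc (1 / (m:ℝ)) * ∑ i, (mip (A i) (Mstar + X))^2
            - (1 / (m:ℝ)) * ∑ i, (mip (A i) (Mstar - X))^2
          = (1 / (m:ℝ)) * (∑ i, (mip (A i) (Mstar + X))^2
            - ∑ i, (mip (A i) (Mstar - X))^2) := by ring
        _ = (1 / (m:ℝ)) * (4 * ∑ i, mip (A i) Mstar * mip (A i) X) := by rw [h1, h2]
        _ = 4 * ((1 / (m:ℝ)) * ∑ i, mip (A i) Mstar * mip (A i) X) := by ring
    have hfrobdiff : Fp^2 - Fm^2 = 4 * mip X Mstar := by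
      rw [hFp, hFm, frob_sq, frob_sq, mip_eq_sum]
      rw [← Finset.sum_sub_distrib]
      rw [Finset.mul_sum]
      apply Finset.sum_congr rfl
      intro i _
      rw [← Finset.sum_sub_distrib, Finset.mul_sum]
      apply Finset.sum_congr rfl
      intro j _
      simp only [Matrix.add_apply, Matrix.sub_apply]
      ring
    have hpar : Fp^2 + Fm^2 = 2 * frobNorm Mstar ^2 + 2 * frobNorm X ^2 := by
      rw [hFp, hFm, frob_sq, frob_sq, frob_sq, frob_sq,
        Finset.mul_sum, Finset.mul_sum, ← Finset.sum_add_distrib, ← Finset.sum_add_distrib]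
      apply Finset.sum_congr rfl
      intro i _
      rw [Finset.mul_sum, Finset.mul_sum, ← Finset.sum_add_distrib, ← Finset.sum_add_distrib]
      apply Finset.sum_congr rfl
      intro j _
      simp only [Matrix.add_apply, Matrix.sub_apply]
      ring
    have hmip : mip X B = (1/4) * ((Sp - Fp^2) - (Sm - Fm^2)) := by
      rw [hB, mip_sub_right, hYX]
      have e1 : (1 / (m:ℝ)) * ∑ i, mip (A i) Mstar * mip (A i) X = (Sp - Sm)/4 := by
        rw [hquad]; ring
      have e2 : mip X Mstar = (Fp^2 - Fm^2)/4 := by rw [hfrobdiff]; ring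
      rw [e1, e2]; ring
    have h5 : |(Sp - Fp^2) - (Sm - Fm^2)| ≤ δ * Fp^2 + δ * Fm^2 := by
      have a1 := abs_le.1 habs1
      have a2 := abs_le.1 habs2
      apply abs_le.2
      constructor <;> [linarith [a1.1, a2.2]; linarith [a1.2, a2.1]]
    rw [hmip, abs_mul]
    have h14 : |(1:ℝ)/4| = 1/4 := by norm_num
    rw [h14]
    calc (1:ℝ)/4 * |(Sp - Fp^2) - (Sm - Fm^2)| ≤ 1/4 * (δ * Fp^2 + δ * Fm^2) := by
          linarith
      _ = δ / 2 * (frobNorm Mstar ^ 2 + frobNorm X ^ 2) := by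
          linear_combination (δ/4) * hpar
  have hkey : ∀ (w : Fin n₁ → ℝ) (v : Fin n₂ → ℝ),
      |∑ i, w i * B.mulVec v i|
        ≤ δ * frobNorm Mstar * (Real.sqrt (∑ i, w i ^2) * Real.sqrt (∑ j, v j ^2)) := by
    intro w v
    set X := Matrix.vecMulVec w v with hXdef
    have hL : ∑ i, w i * B.mulVec v i = mip X B := (mip_vecMulVec w v B).symm
    have hXr : X.rank ≤ 1 := _root_.rank_vecMulVec_le w v
    have hFX : frobNorm X = Real.sqrt (∑ i, w i ^2) * Real.sqrt (∑ j, v j ^2) := by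
      have h1 : frobNorm X = Real.sqrt (frobNorm X ^2) := (Real.sqrt_sq (frob_nonneg X)).symm
      rw [h1, frob_sq_vecMulVec, Real.sqrt_mul (by positivity)]
    rw [hL, ← hFX]
    rcases (frob_nonneg X).lt_or_eq with hX0 | hX0
    · set c := frobNorm Mstar / frobNorm X with hc
      have hc0 : 0 < c := div_pos hFM hX0
      have hq' := hq (c • X) (le_trans (matrix_rank_smul_le c X) hXr)
      have hm : mip (c • X) B = c * mip X B := by
        rw [mip_comm, mip_smul_right, mip_comm B X]
      have hf : frobNorm (c • X) = frobNorm Mstar := by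
        rw [frob_smul, abs_of_pos hc0, hc, div_mul_cancel₀ _ (ne_of_gt hX0)]
      rw [hm, hf, abs_mul, abs_of_pos hc0] at hq'
      have h6 : c * |mip X B| ≤ δ * frobNorm Mstar ^ 2 := by
        have he : δ / 2 * (frobNorm Mstar ^ 2 + frobNorm Mstar ^ 2) = δ * frobNorm Mstar ^ 2 := by
          ring
        linarith
      rw [hc, div_mul_eq_mul_div, div_le_iff₀ hX0] at h6
      have h7 : frobNorm Mstar * |mip X B|
          ≤ frobNorm Mstar * (δ * frobNorm Mstar * frobNorm X) := by
        calc frobNorm Mstar * |mip X B| ≤ δ * frobNorm Mstar ^ 2 * frobNorm X := h6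
          _ = frobNorm Mstar * (δ * frobNorm Mstar * frobNorm X) := by ring
      exact le_of_mul_le_mul_left h7 hFM
    · have hX00 : X = 0 := frob_eq_zero X hX0.symm
      have : mip X B = 0 := by rw [hX00]; simp [mip_eq_sum]
      rw [this, abs_zero]
      positivity
  have hcle : 0 ≤ δ * frobNorm Mstar := by positivity
  apply specNorm_le_of_forall B _ hcle
  intro w v
  calc |∑ i, w i * B.mulVec v i|
      ≤ δ * frobNorm Mstar * (Real.sqrt (∑ i, w i ^2) * Real.sqrt (∑ j, v j ^2)) := hkey w v
    _ = δ * frobNorm Mstar * Real.sqrt (∑ i, w i ^2) * Real.sqrt (∑ j, v j ^2) := by ring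
end
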